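/- With the same vertex-scaling setup, for the angle α_i opposite edge {jk} one has ∂α_i/∂u_j = 2(cosh l_jk + cosh l_ik − cosh l_ij − 1)/(A(cosh l_ij + 1)), where A = sinh l_ik · sinh l_ij · sin α_i. -/

import Mathlib

open Real

/-- Vertex-scaled edge length: `l` with `sinh(l/2) = sinh(d/2)·e^(ur+us)`. -/
noncomputable def vsLen (d ur us : ℝ) : ℝ :=
  2 * Real.arsinh (Real.sinh (d / 2) * Real.exp (ur + us))

/-- The triangle inequalities for the vertex-scaled lengths. -/
def vsAdm (dij dik djk ui uj uk : ℝ) : Prop :=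
  vsLen djk uj uk < vsLen dik ui uk + vsLen dij ui uj ∧
  vsLen dik ui uk < vsLen djk uj uk + vsLen dij ui uj ∧
  vsLen dij ui uj < vsLen djk uj uk + vsLen dik ui uk

lemma cosh_vsLen (d a b : ℝ) :
    Real.cosh (vsLen d a b) = 1 + 2 * (Real.sinh (d/2) * Real.exp (a+b))^2 := by
  rw [vsLen, Real.cosh_two_mul, Real.cosh_arsinh, Real.sinh_arsinh,
    Real.sq_sqrt (by positivity)]
  ring

lemma sinh_vsLen (d a b : ℝ) :
    Real.sinh (vsLen d a b) = 2 * (Real.sinh (d/2) * Real.exp (a+b)) *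
      Real.sqrt (1 + (Real.sinh (d/2) * Real.exp (a+b))^2) := by
  rw [vsLen, Real.sinh_two_mul, Real.sinh_arsinh, Real.cosh_arsinh]

lemma cont_vsLen_fst (d b : ℝ) : Continuous fun t => vsLen d t b :=
  continuous_const.mul (Real.continuous_arsinh.comp (continuous_const.mul
    (Real.continuous_exp.comp (continuous_id.add continuous_const))))

lemma cont_vsLen_snd (d a : ℝ) : Continuous fun t => vsLen d a t :=
  continuous_const.mul (Real.continuous_arsinh.comp (continuous_const.mul
    (Real.continuous_exp.comp (continuous_const.add continuous_id))))

/-- In the vertex-scaling setup, the partial derivative of the angle `αi`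
(opposite the edge `{jk}`) with respect to `uj` equals
`(1/cosh²(lij/2))·tan((αi+αj−αk)/2)`. -/
theorem stmt4 (dij dik djk : ℝ) (hdij : 0 < dij) (hdik : 0 < dik) (hdjk : 0 < djk)
    (αi αj αk : ℝ → ℝ → ℝ → ℝ)
    (hang : ∀ ui uj uk, vsAdm dij dik djk ui uj uk →
      αi ui uj uk ∈ Set.Ioo 0 π ∧ αj ui uj uk ∈ Set.Ioo 0 π ∧ αk ui uj uk ∈ Set.Ioo 0 π ∧
      Real.cos (αi ui uj uk) =
        (Real.cosh (vsLen dij ui uj) * Real.cosh (vsLen dik ui uk)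
            - Real.cosh (vsLen djk uj uk)) /
          (Real.sinh (vsLen dij ui uj) * Real.sinh (vsLen dik ui uk)) ∧
      Real.cos (αj ui uj uk) =
        (Real.cosh (vsLen dij ui uj) * Real.cosh (vsLen djk uj uk)
            - Real.cosh (vsLen dik ui uk)) /
          (Real.sinh (vsLen dij ui uj) * Real.sinh (vsLen djk uj uk)) ∧
      Real.cos (αk ui uj uk) =
        (Real.cosh (vsLen dik ui uk) * Real.cosh (vsLen djk uj uk)
            - Real.cosh (vsLen dij ui uj)) /
          (Real.sinh (vsLen dik ui uk) * Real.sinh (vsLen djk uj uk)))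
    (ui uj uk : ℝ) (hadm : vsAdm dij dik djk ui uj uk) :
    deriv (fun t => αi ui t uk) uj =
      2 * (Real.cosh (vsLen djk uj uk) + Real.cosh (vsLen dik ui uk)
            - Real.cosh (vsLen dij ui uj) - 1) /
        ((Real.sinh (vsLen dik ui uk) * Real.sinh (vsLen dij ui uj) * Real.sin (αi ui uj uk)) *
          (Real.cosh (vsLen dij ui uj) + 1)) := by
  -- the explicit cosine-law function of `t`
  set G : ℝ → ℝ := fun t =>
    ((1 + 2 * (Real.sinh (dij/2) * Real.exp (ui+t))^2) *
        (1 + 2 * (Real.sinh (dik/2) * Real.exp (ui+uk))^2)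
      - (1 + 2 * (Real.sinh (djk/2) * Real.exp (t+uk))^2)) /
    ((2 * (Real.sinh (dij/2) * Real.exp (ui+t)) *
        Real.sqrt (1 + (Real.sinh (dij/2) * Real.exp (ui+t))^2)) *
      (2 * (Real.sinh (dik/2) * Real.exp (ui+uk)) *
        Real.sqrt (1 + (Real.sinh (dik/2) * Real.exp (ui+uk))^2))) with hGdef
  have hGcos : ∀ t, vsAdm dij dik djk ui t uk → Real.cos (αi ui t uk) = G t := by
    intro t ht
    obtain ⟨-, -, -, hcos, -⟩ := hang ui t uk ht
    rw [hcos, cosh_vsLen, cosh_vsLen, cosh_vsLen, sinh_vsLen, sinh_vsLen]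
  -- admissibility holds in a neighborhood
  have hU : ∀ᶠ t in nhds uj, vsAdm dij dik djk ui t uk := by
    have h1 : Continuous fun t => vsLen dij ui t := cont_vsLen_snd dij ui
    have h2 : Continuous fun t => vsLen djk t uk := cont_vsLen_fst djk uk
    have hopen : IsOpen {t | vsAdm dij dik djk ui t uk} := by
      unfold vsAdm
      exact ((isOpen_lt h2 (continuous_const.add h1)).and
        ((isOpen_lt continuous_const (h2.add h1)).and
          (isOpen_lt h1 (h2.add continuous_const))))
    exact hopen.mem_nhds hadm
  -- locally, the angle equals `arccos ∘ G`
  have hEv : (fun t => αi ui t uk) =ᶠ[nhds uj] fun t => Real.arccos (G t) := by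
    filter_upwards [hU] with t ht
    obtain ⟨hio, -, -, -, -⟩ := hang ui t uk ht
    rw [← hGcos t ht, Real.arccos_cos hio.1.le hio.2.le]
  -- range of the cosine at the base point
  obtain ⟨hio, -, -, -, -⟩ := hang ui uj uk hadm
  have hx := hGcos uj hadm
  have hxlt : G uj < 1 := by
    rw [← hx, ← Real.cos_zero]
    exact Real.cos_lt_cos_of_nonneg_of_le_pi le_rfl hio.2.le hio.1
  have hxgt : -1 < G uj := by
    rw [← hx, ← Real.cos_pi]
    exact Real.cos_lt_cos_of_nonneg_of_le_pi hio.1.le le_rfl hio.2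
  -- abbreviations
  set p : ℝ := Real.sinh (dij/2) * Real.exp (ui+uj) with hpdef
  set q : ℝ := Real.sinh (dik/2) * Real.exp (ui+uk) with hqdef
  set r : ℝ := Real.sinh (djk/2) * Real.exp (uj+uk) with hrdef
  have hp : 0 < p := mul_pos (Real.sinh_pos_iff.2 (by linarith)) (Real.exp_pos _)
  have hq : 0 < q := mul_pos (Real.sinh_pos_iff.2 (by linarith)) (Real.exp_pos _)
  have hr : 0 < r := mul_pos (Real.sinh_pos_iff.2 (by linarith)) (Real.exp_pos _)
  set P : ℝ := Real.sqrt (1 + p^2) with hPdef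
  set Q : ℝ := Real.sqrt (1 + q^2) with hQdef
  have hPpos : 0 < P := Real.sqrt_pos.2 (by positivity)
  have hQpos : 0 < Q := Real.sqrt_pos.2 (by positivity)
  have hP2 : P^2 = 1 + p^2 := Real.sq_sqrt (by positivity)
  have hQ2 : Q^2 = 1 + q^2 := Real.sq_sqrt (by positivity)
  -- derivatives of the building blocks
  have hPd : HasDerivAt (fun t => Real.sinh (dij/2) * Real.exp (ui+t)) p uj := by
    simpa using (((hasDerivAt_id uj).const_add ui).exp.const_mul (Real.sinh (dij/2)))
  have hRd : HasDerivAt (fun t => Real.sinh (djk/2) * Real.exp (t+uk)) r uj := by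
    simpa using (((hasDerivAt_id uj).add_const uk).exp.const_mul (Real.sinh (djk/2)))
  have hPd2 : HasDerivAt (fun t => (Real.sinh (dij/2) * Real.exp (ui+t))^2) (2*p^2) uj := by
    have h := hPd.fun_pow 2
    refine h.congr_deriv ?_
    simp [← hpdef]; ring
  have hRd2 : HasDerivAt (fun t => (Real.sinh (djk/2) * Real.exp (t+uk))^2) (2*r^2) uj := by
    have h := hRd.fun_pow 2
    refine h.congr_deriv ?_
    simp [← hrdef]; ring
  have hnum : HasDerivAt (fun t =>
      (1 + 2 * (Real.sinh (dij/2) * Real.exp (ui+t))^2) * (1 + 2 * q^2)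
        - (1 + 2 * (Real.sinh (djk/2) * Real.exp (t+uk))^2))
      (2*(2*p^2) * (1 + 2*q^2) - 2*(2*r^2)) uj :=
    (((hPd2.const_mul 2).const_add 1).mul_const (1 + 2*q^2)).sub
      ((hRd2.const_mul 2).const_add 1)
  have hsq : HasDerivAt (fun t => Real.sqrt (1 + (Real.sinh (dij/2) * Real.exp (ui+t))^2))
      ((2*p^2) / (2 * P)) uj := by
    have h := (hPd2.const_add 1).sqrt (x := uj) (by rw [← hpdef]; positivity)
    rw [← hpdef] at h
    exact h
  have hden : HasDerivAt (fun t =>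
      (2 * (Real.sinh (dij/2) * Real.exp (ui+t)) *
        Real.sqrt (1 + (Real.sinh (dij/2) * Real.exp (ui+t))^2)) * (2 * q * Q))
      ((2*p * P + 2*p * ((2*p^2) / (2*P))) * (2 * q * Q)) uj := by
    have h := ((hPd.const_mul 2).mul hsq).mul_const (2 * q * Q)
    rw [← hpdef, ← hPdef] at h
    exact h
  have hdennz : (2 * p * P) * (2 * q * Q) ≠ 0 := by positivity
  have hGd : HasDerivAt G
      (((2*(2*p^2) * (1 + 2*q^2) - 2*(2*r^2)) * ((2 * p * P) * (2 * q * Q))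
        - ((1 + 2*p^2) * (1 + 2*q^2) - (1 + 2*r^2)) *
            ((2*p * P + 2*p * ((2*p^2) / (2*P))) * (2 * q * Q)))
        / ((2 * p * P) * (2 * q * Q))^2) uj := by
    have h := hnum.fun_div hden hdennz
    rw [hGdef]
    convert h using 2
  -- clean form of the derivative of G
  have hGd' : HasDerivAt G
      (-(2 * (q^2 + r^2 - p^2)) / ((1 + p^2) * ((2 * p * P) * (2 * q * Q)))) uj := by
    convert hGd using 1
    have h1p : (1:ℝ) + p^2 ≠ 0 := by positivity
    field_simp
    linear_combination (-2*(q^2+r^2-p^2) - (1+p^2)*(2*p^2+4*p^2*q^2-2*r^2-2*q^2)) * hP2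
  -- chain rule through arccos
  have hS : 0 < Real.sqrt (1 - (G uj)^2) := Real.sqrt_pos.2 (by nlinarith)
  have hchain : HasDerivAt (fun t => Real.arccos (G t))
      ((-(1 / Real.sqrt (1 - (G uj)^2))) *
        (-(2 * (q^2 + r^2 - p^2)) / ((1 + p^2) * ((2 * p * P) * (2 * q * Q))))) uj :=
    (Real.hasDerivAt_arccos (by linarith) (by linarith)).comp uj hGd'
  -- sin of the angle
  have hsin : Real.sin (αi ui uj uk) = Real.sqrt (1 - (G uj)^2) := by
    have : αi ui uj uk = Real.arccos (G uj) := by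
      rw [← hx, Real.arccos_cos hio.1.le hio.2.le]
    rw [this, Real.sin_arccos]
  -- put everything together
  rw [hEv.deriv_eq, hchain.deriv, cosh_vsLen, cosh_vsLen, cosh_vsLen,
    sinh_vsLen, sinh_vsLen, hsin, ← hpdef, ← hqdef, ← hrdef, ← hPdef, ← hQdef]
  have hSne : Real.sqrt (1 - (G uj)^2) ≠ 0 := ne_of_gt hS
  field_simp
  ring
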